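/- The band generators a_{ij} of the braid group B_n satisfy a_{kl}a_{ij} = a_{ij}a_{kl} whenever (k-i)(k-j)(l-i)(l-j) > 0, where 1 ≤ j < i ≤ n and 1 ≤ l < k ≤ n. -/

import Mathlib

def braidRels (m : ℕ) : Set (FreeGroup (Fin m)) :=
  {r | ∃ i j : Fin m,
      ((i : ℕ) + 2 ≤ (j : ℕ) ∧
        r = FreeGroup.of i * FreeGroup.of j * (FreeGroup.of i)⁻¹ * (FreeGroup.of j)⁻¹) ∨
      ((i : ℕ) + 1 = (j : ℕ) ∧
        r = FreeGroup.of i * FreeGroup.of j * FreeGroup.of i *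
            (FreeGroup.of j * FreeGroup.of i * FreeGroup.of j)⁻¹)}

/-- Artin's braid group `B_n`, with generators `σ₁, …, σ_{n-1}`. -/
abbrev BraidGroup (n : ℕ) := PresentedGroup (braidRels (n - 1))

/-- The Artin generator `σ i` of `B_n` (junk value `1` if `i` is out of range). -/
def bσ (n i : ℕ) : BraidGroup n :=
  if h : i - 1 < n - 1 then PresentedGroup.of ⟨i - 1, h⟩ else 1

/-- `δ = σ_{n-1} σ_{n-2} ⋯ σ₁`. -/
def bδ (n : ℕ) : BraidGroup n := ((List.range (n-1)).map (fun k => bσ n (n-1-k))).prod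

/-- `ε = δ σ₁`. -/
def bε (n : ℕ) : BraidGroup n := bδ n * bσ n 1

/-- `Δ = σ₁ (σ₂σ₁) ⋯ (σ_{n-1} ⋯ σ₁)`. -/
def bΔ (n : ℕ) : BraidGroup n :=
  ((List.range (n-1)).map (fun m => ((List.range (m+1)).map (fun k => bσ n (m+1-k))).prod)).prod

/-- The band generator `a_{ij} = σ_{i-1} ⋯ σ_{j+1} σ_j σ_{j+1}⁻¹ ⋯ σ_{i-1}⁻¹`. -/
def band (n i j : ℕ) : BraidGroup n :=
  (((List.range (i-1-j)).map (fun k => bσ n (i-1-k))).prod) * bσ n j *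
  (((List.range (i-1-j)).map (fun k => bσ n (i-1-k))).prod)⁻¹

/-- `[i, i-1, …, j] = a_{i,i-1} a_{i-1,i-2} ⋯ a_{j+1,j}`. -/
def bchain (n i j : ℕ) : BraidGroup n :=
  ((List.range (i-j)).map (fun t => band n (i-t) (i-t-1))).prod

/- ### Auxiliary development -/

private lemma pg_rel_one {m : ℕ} {r : FreeGroup (Fin m)} (h : r ∈ braidRels m) :
    PresentedGroup.mk (braidRels m) r = 1 :=
  (QuotientGroup.eq_one_iff r).mpr (Subgroup.subset_normalClosure h)

private lemma of_comm {m : ℕ} (i j : Fin m) (h : (i : ℕ) + 2 ≤ (j : ℕ)) :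
    Commute (PresentedGroup.of (rels := braidRels m) i) (PresentedGroup.of j) := by
  have h1 := pg_rel_one (r := FreeGroup.of i * FreeGroup.of j * (FreeGroup.of i)⁻¹ *
      (FreeGroup.of j)⁻¹) ⟨i, j, Or.inl ⟨h, rfl⟩⟩
  simp only [map_mul, map_inv] at h1
  have h2 := mul_inv_eq_one.mp h1
  have h3 := (mul_inv_eq_iff_eq_mul).mp h2
  exact h3

private lemma of_braid {m : ℕ} (i j : Fin m) (h : (i : ℕ) + 1 = (j : ℕ)) :
    PresentedGroup.of (rels := braidRels m) i * PresentedGroup.of j * PresentedGroup.of i =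
      PresentedGroup.of j * PresentedGroup.of i * PresentedGroup.of j := by
  have h1 := pg_rel_one (r := FreeGroup.of i * FreeGroup.of j * FreeGroup.of i *
      (FreeGroup.of j * FreeGroup.of i * FreeGroup.of j)⁻¹) ⟨i, j, Or.inr ⟨h, rfl⟩⟩
  simp only [map_mul, map_inv] at h1
  exact mul_inv_eq_one.mp h1

private lemma bσ_comm (n a b : ℕ) (ha : 1 ≤ a) (hab : a + 2 ≤ b) :
    Commute (bσ n a) (bσ n b) := by
  unfold bσ
  split_ifs with h1 h2 h2
  · exact of_comm _ _ (show a - 1 + 2 ≤ b - 1 by omega)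
  · exact Commute.one_right _
  · exact Commute.one_left _
  · exact Commute.one_left _

private lemma bσ_braid (n a : ℕ) (ha : 1 ≤ a) (h : a < n - 1) :
    bσ n a * bσ n (a+1) * bσ n a = bσ n (a+1) * bσ n a * bσ n (a+1) := by
  unfold bσ
  rw [dif_pos (show a - 1 < n - 1 by omega), dif_pos (show a + 1 - 1 < n - 1 by omega)]
  exact of_braid _ _ (show a - 1 + 1 = a + 1 - 1 by omega)

/-- `Dg n b len = σ_{b+len} σ_{b+len-1} ⋯ σ_b`. -/
private def Dg (n b : ℕ) : ℕ → BraidGroup n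
  | 0 => bσ n b
  | len+1 => bσ n (b+len+1) * Dg n b len

private lemma Dg_succ (n b len : ℕ) : Dg n b (len+1) = bσ n (b+len+1) * Dg n b len := rfl

private lemma commute_Dg (n b len : ℕ) (g : BraidGroup n)
    (h : ∀ m, m ≤ len → Commute g (bσ n (b+m))) : Commute g (Dg n b len) := by
  induction len with
  | zero => simpa [Dg] using h 0 le_rfl
  | succ m ih =>
    rw [Dg_succ]
    exact Commute.mul_right (h (m+1) le_rfl) (ih fun m' hm' => h m' (le_trans hm' (Nat.le_succ _)))

private lemma bσ_commute_Dg_low (n b len c : ℕ) (hc : 1 ≤ c) (h : c + 2 ≤ b) :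
    Commute (bσ n c) (Dg n b len) :=
  commute_Dg n b len _ fun m _ => bσ_comm n c (b+m) hc (by omega)

private lemma bσ_commute_Dg_high (n b len c : ℕ) (hb : 1 ≤ b) (h : b + len + 2 ≤ c) :
    Commute (bσ n c) (Dg n b len) :=
  commute_Dg n b len _ fun m hm => (bσ_comm n (b+m) c (by omega) (by omega)).symm

private lemma bσ_mul_Dg (n b : ℕ) :
    ∀ len t, 1 ≤ b → b ≤ t → t + 1 ≤ b + len → b + len ≤ n - 1 →
      bσ n t * Dg n b len = Dg n b len * bσ n (t+1) := by
  intro len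
  induction len with
  | zero => intro t hb h1 h2 _; exact absurd h2 (by omega)
  | succ m ih =>
    intro t hb h1 h2 h3
    rcases Nat.lt_or_ge t (b+m) with hlt | hge
    · have htop : Commute (bσ n t) (bσ n (b+m+1)) := bσ_comm n t (b+m+1) (by omega) (by omega)
      rw [Dg_succ, ← mul_assoc, htop.eq, mul_assoc, ih t hb h1 (by omega) (by omega),
        ← mul_assoc]
    · have ht : t = b + m := by omega
      subst ht
      cases m with
      | zero =>
        rw [Dg_succ]
        show bσ n (b+0) * (bσ n (b+0+1) * Dg n b 0) = _
        have e : b + 0 = b := rfl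
        rw [e, Dg]
        rw [← mul_assoc, bσ_braid n b hb (by omega), mul_assoc]
      | succ p =>
        rw [Dg_succ, Dg_succ]
        have e1 : b + (p+1) = b + p + 1 := by omega
        have e2 : b + (p+1) + 1 = b + p + 1 + 1 := by omega
        rw [e1]
        have hbr := bσ_braid n (b+p+1) (by omega) (by omega)
        have hcm : Commute (bσ n (b+p+1+1)) (Dg n b p) :=
          bσ_commute_Dg_high n b p (b+p+1+1) hb (by omega)
        calc bσ n (b+p+1) * (bσ n (b+p+1+1) * (bσ n (b+p+1) * Dg n b p))
            = (bσ n (b+p+1) * bσ n (b+p+1+1) * bσ n (b+p+1)) * Dg n b p := by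
              simp [mul_assoc]
          _ = (bσ n (b+p+1+1) * bσ n (b+p+1) * bσ n (b+p+1+1)) * Dg n b p := by rw [hbr]
          _ = bσ n (b+p+1+1) * (bσ n (b+p+1) * (bσ n (b+p+1+1) * Dg n b p)) := by
              simp [mul_assoc]
          _ = bσ n (b+p+1+1) * (bσ n (b+p+1) * (Dg n b p * bσ n (b+p+1+1))) := by rw [hcm.eq]
          _ = bσ n (b+p+1+1) * (bσ n (b+p+1) * Dg n b p) * bσ n (b+p+1+1) := by
              simp [mul_assoc]

private lemma listA_eq (n : ℕ) :
    ∀ len a, len + 1 ≤ a →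
      ((List.range (len+1)).map (fun k => bσ n (a-k))).prod = Dg n (a-len) len := by
  intro len
  induction len with
  | zero => intro a _; simp [Dg, List.range_succ]
  | succ m ih =>
    intro a ha
    rw [List.range_succ_eq_map]
    simp only [List.map_cons, List.map_map, List.prod_cons]
    have e : ((List.range (m+1)).map ((fun k => bσ n (a-k)) ∘ Nat.succ)).prod
        = Dg n (a-1-m) m := by
      have h1 : ((fun k => bσ n (a-k)) ∘ Nat.succ) = fun k => bσ n (a-1-k) := by
        funext k; simp only [Function.comp]; congr 1; omega
      rw [h1, ih (a-1) (by omega)]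
    rw [e]
    have e1 : a - (m+1) = a - 1 - m := by omega
    have e2 : a - (m+1) + m + 1 = a := by omega
    rw [Dg_succ, e1, show a - 1 - m + m + 1 = a - 0 from by omega]

private lemma band_eq_low (n j : ℕ) : band n (j+1) j = bσ n j := by
  have : j + 1 - 1 - j = 0 := by omega
  simp [band, this]

private lemma band_eq_high (n i j : ℕ) (h : j + 2 ≤ i) :
    band n i j = Dg n (j+1) (i-j-2) * bσ n j * (Dg n (j+1) (i-j-2))⁻¹ := by
  have h1 : i - 1 - j = (i-j-2) + 1 := by omega
  have h2 : i - 1 - (i-j-2) = j + 1 := by omega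
  unfold band
  rw [h1, listA_eq n (i-j-2) (i-1) (by omega), h2]

private lemma bσ_commute_band (n i j c : ℕ) (hj : 1 ≤ j) (hji : j < i) (hin : i ≤ n)
    (hc1 : 1 ≤ c)
    (hc : (c + 2 ≤ j) ∨ (i + 1 ≤ c) ∨ (j + 1 ≤ c ∧ c + 2 ≤ i)) :
    Commute (bσ n c) (band n i j) := by
  rcases Nat.lt_or_ge i (j+2) with hcase | hcase
  · have hi : i = j + 1 := by omega
    subst hi
    rw [band_eq_low]
    rcases hc with h | h | h
    · exact bσ_comm n c j hc1 h
    · exact (bσ_comm n j c hj (by omega)).symm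
    · exact absurd h (by omega)
  · rw [band_eq_high n i j hcase]
    set D := Dg n (j+1) (i-j-2) with hD
    rcases hc with h | h | h
    · have hDc : Commute (bσ n c) D := bσ_commute_Dg_low n (j+1) (i-j-2) c hc1 (by omega)
      have hjc : Commute (bσ n c) (bσ n j) := bσ_comm n c j hc1 (by omega)
      exact (hDc.mul_right hjc).mul_right hDc.inv_right
    · have hDc : Commute (bσ n c) D := bσ_commute_Dg_high n (j+1) (i-j-2) c (by omega) (by omega)
      have hjc : Commute (bσ n c) (bσ n j) := (bσ_comm n j c hj (by omega)).symm
      exact (hDc.mul_right hjc).mul_right hDc.inv_right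
    · have hk1 : bσ n c * D = D * bσ n (c+1) :=
        bσ_mul_Dg n (j+1) (i-j-2) c (by omega) h.1 (by omega) (by omega)
      have hk2 : bσ n (c+1) * D⁻¹ = D⁻¹ * bσ n c := by
        have h5 : D⁻¹ * (D * bσ n (c+1)) * D⁻¹ = D⁻¹ * (bσ n c * D) * D⁻¹ := by rw [hk1]
        simpa [mul_assoc] using h5
      have hcj : Commute (bσ n j) (bσ n (c+1)) := bσ_comm n j (c+1) hj (by omega)
      show bσ n c * (D * bσ n j * D⁻¹) = D * bσ n j * D⁻¹ * bσ n c
      calc bσ n c * (D * bσ n j * D⁻¹)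
          = (bσ n c * D) * (bσ n j * D⁻¹) := by simp [mul_assoc]
        _ = (D * bσ n (c+1)) * (bσ n j * D⁻¹) := by rw [hk1]
        _ = D * (bσ n (c+1) * bσ n j) * D⁻¹ := by simp [mul_assoc]
        _ = D * (bσ n j * bσ n (c+1)) * D⁻¹ := by rw [← hcj.eq]
        _ = D * bσ n j * (bσ n (c+1) * D⁻¹) := by simp [mul_assoc]
        _ = D * bσ n j * (D⁻¹ * bσ n c) := by rw [hk2]
        _ = D * bσ n j * D⁻¹ * bσ n c := by simp [mul_assoc]

private lemma commute_band (n k l : ℕ) (g : BraidGroup n) (hl : 1 ≤ l) (hlk : l < k)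
    (h : ∀ c, l ≤ c → c + 1 ≤ k → Commute g (bσ n c)) : Commute g (band n k l) := by
  unfold band
  have hP : Commute g (((List.range (k-1-l)).map (fun m => bσ n (k-1-m))).prod) := by
    apply Commute.list_prod_right
    intro x hx
    simp only [List.mem_map, List.mem_range] at hx
    obtain ⟨m, hm, rfl⟩ := hx
    exact h (k-1-m) (by omega) (by omega)
  exact (hP.mul_right (h l le_rfl (by omega))).mul_right hP.inv_right

/-- The band generators satisfy `a_{kl} a_{ij} = a_{ij} a_{kl}`
whenever `(k-i)(k-j)(l-i)(l-j) > 0`, for `1 ≤ j < i ≤ n` and `1 ≤ l < k ≤ n`. -/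
theorem band_commute (n i j k l : ℕ) (hj : 1 ≤ j) (hji : j < i) (hin : i ≤ n)
    (hl : 1 ≤ l) (hlk : l < k) (hkn : k ≤ n)
    (hpos : 0 < ((k : ℤ) - i) * ((k : ℤ) - j) * ((l : ℤ) - i) * ((l : ℤ) - j)) :
    band n k l * band n i j = band n i j * band n k l := by
  have hki : k ≠ i := by rintro rfl; simp at hpos
  have hkj : k ≠ j := by rintro rfl; simp at hpos
  have hli : l ≠ i := by rintro rfl; simp at hpos
  have hlj : l ≠ j := by rintro rfl; simp at hpos
  have hcase : (k < j) ∨ (i < l) ∨ (j < l ∧ k < i) ∨ (l < j ∧ i < k) := by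
    by_contra hcon
    push_neg at hcon
    obtain ⟨h1, h2, h3, h4⟩ := hcon
    rcases Nat.lt_or_ge l j with hlj' | hlj'
    · -- l < j, so k ≤ i hence k < i : two negative-sign pattern fails
      have hik : k < i := lt_of_le_of_ne (h4 hlj') hki
      have hjk : j < k := lt_of_le_of_ne h1 (Ne.symm hkj)
      have : 0 < ((i : ℤ) - k) * ((k : ℤ) - j) * ((i : ℤ) - l) * ((j : ℤ) - l) := by
        have a1 : (0:ℤ) < (i:ℤ) - k := by omega
        have a2 : (0:ℤ) < (k:ℤ) - j := by omega
        have a3 : (0:ℤ) < (i:ℤ) - l := by omega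
        have a4 : (0:ℤ) < (j:ℤ) - l := by omega
        positivity
      nlinarith [hpos, this]
    · have hjl : j < l := lt_of_le_of_ne hlj' (Ne.symm hlj)
      have hik : i < k := lt_of_le_of_ne (h3 hjl) (Ne.symm hki)
      have hli' : l < i := by omega
      have : 0 < ((k : ℤ) - i) * ((k : ℤ) - j) * ((i : ℤ) - l) * ((l : ℤ) - j) := by
        have a1 : (0:ℤ) < (k:ℤ) - i := by omega
        have a2 : (0:ℤ) < (k:ℤ) - j := by omega
        have a3 : (0:ℤ) < (i:ℤ) - l := by omega
        have a4 : (0:ℤ) < (l:ℤ) - j := by omega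
        positivity
      nlinarith [hpos, this]
  rcases hcase with h | h | h | h
  · exact ((commute_band n k l (band n i j) hl hlk (fun c hc1 hc2 =>
      (bσ_commute_band n i j c hj hji hin (by omega) (Or.inl (by omega))).symm)).symm).eq
  · exact ((commute_band n k l (band n i j) hl hlk (fun c hc1 hc2 =>
      (bσ_commute_band n i j c hj hji hin (by omega) (Or.inr (Or.inl (by omega)))).symm)).symm).eq
  · exact ((commute_band n k l (band n i j) hl hlk (fun c hc1 hc2 =>
      (bσ_commute_band n i j c hj hji hin (by omega)
        (Or.inr (Or.inr ⟨by omega, by omega⟩))).symm)).symm).eq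
  · exact (commute_band n i j (band n k l) hj hji (fun c hc1 hc2 =>
      (bσ_commute_band n k l c hl hlk hkn (by omega)
        (Or.inr (Or.inr ⟨by omega, by omega⟩))).symm)).eq
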